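/- arXiv:1012.2779 — 4 statements merged into one kernel-verified Lean document; each statement's English description precedes it below -/
import Mathlib

section
/- Let a > 0 and let p : ℝ³ → ℝ be integrable with support contained in the closed ball B̄_a = {x ∈ ℝ³ : |x| ≤ a}, and suppose p is not equal to zero almost everywhere. Then for every fixed κ ≥ 0, limsup_{η→+∞} sup_{β ∈ S²} |p̃((κ+iη)β)| = +∞. -/
open MeasureTheory Complex Filter
open scoped ENNReal NNReal

noncomputable def ptilde (p : EuclideanSpace ℝ (Fin 3) → ℝ)
    (β : EuclideanSpace ℝ (Fin 3)) (z : ℂ) : ℂ :=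
  ∫ x : EuclideanSpace ℝ (Fin 3), (p x : ℂ) * Complex.exp (Complex.I * z * ((inner ℝ β x : ℝ) : ℂ))

section Stmt1Aux

open Metric Bornology
open scoped Real FourierTransform RealInnerProductSpace Topology

namespace Stmt1Aux

abbrev V3 := EuclideanSpace ℝ (Fin 3)

variable {a : ℝ} {p : V3 → ℝ}

lemma norm_term (r : ℝ) (z : ℂ) (t : ℝ) :
    ‖(r : ℂ) * Complex.exp (Complex.I * z * (t : ℂ))‖ = |r| * Real.exp (-(z.im) * t) := by
  have h : (Complex.I * z * (t : ℂ)).re = -(z.im) * t := by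
    simp [Complex.mul_re, Complex.mul_im]
  rw [norm_mul, Complex.norm_real, Complex.norm_exp, h, Real.norm_eq_abs]

section

variable {a : ℝ} {p : V3 → ℝ}

lemma term_bound (ha : 0 < a) (hsupp : Function.support p ⊆ Metric.closedBall 0 a)
    {β : V3} (hβ : ‖β‖ = 1) (z : ℂ) (x : V3) :
    ‖(p x : ℂ) * Complex.exp (Complex.I * z * ((inner ℝ β x : ℝ) : ℂ))‖
      ≤ |p x| * Real.exp (a * |z.im|) := by
  rw [norm_term]
  rcases eq_or_ne (p x) 0 with h | h
  · simp [h]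
  · have hx : ‖x‖ ≤ a := by
      have := hsupp h
      simpa [Metric.mem_closedBall, dist_eq_norm] using this
    have ht : |(inner ℝ β x : ℝ)| ≤ a :=
      le_trans (le_trans (abs_real_inner_le_norm β x) (by rw [hβ, one_mul])) hx
    have hle : -(z.im) * (inner ℝ β x : ℝ) ≤ a * |z.im| := by
      calc -(z.im) * (inner ℝ β x : ℝ) ≤ |(-(z.im)) * (inner ℝ β x : ℝ)| := le_abs_self _
        _ = |z.im| * |(inner ℝ β x : ℝ)| := by rw [abs_mul, abs_neg]
        _ ≤ |z.im| * a := by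
            exact mul_le_mul_of_nonneg_left ht (abs_nonneg _)
        _ = a * |z.im| := mul_comm _ _
    exact mul_le_mul_of_nonneg_left (Real.exp_le_exp.2 hle) (abs_nonneg _)

lemma integrand_aesm (hint : Integrable p) (β : V3) (z : ℂ) :
    AEStronglyMeasurable
      (fun x : V3 => (p x : ℂ) * Complex.exp (Complex.I * z * ((inner ℝ β x : ℝ) : ℂ)))
      volume := by
  refine AEStronglyMeasurable.mul ?_ ?_
  · exact Complex.continuous_ofReal.comp_aestronglyMeasurable hint.1
  · refine Continuous.aestronglyMeasurable ?_
    exact Complex.continuous_exp.comp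
      (continuous_const.mul (Complex.continuous_ofReal.comp (innerSL ℝ β).continuous))

lemma integrand_integrable (ha : 0 < a) (hint : Integrable p)
    (hsupp : Function.support p ⊆ Metric.closedBall 0 a)
    {β : V3} (hβ : ‖β‖ = 1) (z : ℂ) :
    Integrable
      (fun x : V3 => (p x : ℂ) * Complex.exp (Complex.I * z * ((inner ℝ β x : ℝ) : ℂ))) := by
  refine Integrable.mono (hint.norm.mul_const (Real.exp (a * |z.im|)))
    (integrand_aesm hint β z) ?_
  filter_upwards with x
  have := term_bound ha hsupp hβ z x
  calc ‖(p x : ℂ) * Complex.exp (Complex.I * z * ((inner ℝ β x : ℝ) : ℂ))‖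
      ≤ |p x| * Real.exp (a * |z.im|) := this
    _ = ‖‖p x‖ * Real.exp (a * |z.im|)‖ := by
        rw [Real.norm_eq_abs (‖p x‖ * _), abs_mul, Real.norm_eq_abs,
          _root_.abs_abs, abs_of_pos (Real.exp_pos (a * |z.im|))]

lemma ptilde_bound (ha : 0 < a) (hint : Integrable p)
    (hsupp : Function.support p ⊆ Metric.closedBall 0 a)
    {β : V3} (hβ : ‖β‖ = 1) (z : ℂ) :
    ‖ptilde p β z‖ ≤ (∫ x, |p x|) * Real.exp (a * |z.im|) := by
  refine (norm_integral_le_integral_norm _).trans ?_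
  rw [← integral_mul_const]
  refine integral_mono ((integrand_integrable ha hint hsupp hβ z).norm) ?_ ?_
  · exact hint.abs.mul_const _
  · exact term_bound ha hsupp hβ z

end

lemma ptilde_differentiable (ha : 0 < a) (hint : Integrable p)
    (hsupp : Function.support p ⊆ Metric.closedBall 0 a)
    {β : V3} (hβ : ‖β‖ = 1) :
    Differentiable ℂ (ptilde p β) := by
  intro z₀
  set F' : ℂ → V3 → ℂ := fun z x =>
    (p x : ℂ) * (Complex.I * ((inner ℝ β x : ℝ) : ℂ) * Complex.exp (Complex.I * z * ((inner ℝ β x : ℝ) : ℂ)))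
  have key := hasDerivAt_integral_of_dominated_loc_of_deriv_le (F := fun z x =>
      (p x : ℂ) * Complex.exp (Complex.I * z * ((inner ℝ β x : ℝ) : ℂ)))
      (F' := F') (x₀ := z₀) (μ := volume)
      (bound := fun x => |p x| * (a * Real.exp (a * (|z₀.im| + 1)))) (Metric.ball_mem_nhds z₀ one_pos)
      (Filter.Eventually.of_forall fun z => integrand_aesm hint β z)
      (integrand_integrable ha hint hsupp hβ z₀) ?_ ?_ ?_ ?_
  · exact (key.2.differentiableAt).congr_of_eventuallyEq <| by
      filter_upwards with z using rfl
  · -- measurability of F' z₀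
    refine AEStronglyMeasurable.mul (Complex.continuous_ofReal.comp_aestronglyMeasurable hint.1) ?_
    refine Continuous.aestronglyMeasurable ?_
    refine Continuous.mul ?_ ?_
    · exact continuous_const.mul (Complex.continuous_ofReal.comp (innerSL ℝ β).continuous)
    · exact Complex.continuous_exp.comp
        (continuous_const.mul (Complex.continuous_ofReal.comp (innerSL ℝ β).continuous))
  · -- bound
    filter_upwards with x
    intro z hz
    rcases eq_or_ne (p x) 0 with h | h
    · simp [F', h]
    · have hx : ‖x‖ ≤ a := by
        have := hsupp h
        simpa [Metric.mem_closedBall, dist_eq_norm] using this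
      have ht : |(inner ℝ β x : ℝ)| ≤ a :=
        le_trans (le_trans (abs_real_inner_le_norm β x) (by rw [hβ, one_mul])) hx
      have him : |z.im| ≤ |z₀.im| + 1 := by
        have : |z.im - z₀.im| ≤ ‖z - z₀‖ := by
          simpa using Complex.abs_im_le_norm (z - z₀)
        have hlt : ‖z - z₀‖ < 1 := by simpa [Metric.mem_ball, dist_eq_norm] using hz
        calc |z.im| ≤ |z₀.im| + |z.im - z₀.im| := by
              have := abs_sub_abs_le_abs_sub z.im z₀.im
              linarith [abs_sub_comm z.im z₀.im ▸ this]
          _ ≤ |z₀.im| + 1 := by linarith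
      have : ‖F' z x‖ = |p x| * (|(inner ℝ β x : ℝ)| * Real.exp (-(z.im) * (inner ℝ β x : ℝ))) := by
        simp only [F']
        rw [show (p x : ℂ) * (Complex.I * ((inner ℝ β x : ℝ) : ℂ) * Complex.exp (Complex.I * z * ((inner ℝ β x : ℝ) : ℂ)))
            = ((inner ℝ β x : ℝ) : ℂ) * ((p x : ℂ) * Complex.exp (Complex.I * z * ((inner ℝ β x : ℝ) : ℂ))) * Complex.I by ring]
        rw [norm_mul, norm_mul, Complex.norm_I, mul_one, Complex.norm_real, norm_term,
          Real.norm_eq_abs]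
        ring
      rw [this]
      have hexp : Real.exp (-(z.im) * (inner ℝ β x : ℝ)) ≤ Real.exp (a * (|z₀.im| + 1)) := by
        refine Real.exp_le_exp.2 ?_
        calc -(z.im) * (inner ℝ β x : ℝ) ≤ |(-(z.im)) * (inner ℝ β x : ℝ)| := le_abs_self _
          _ = |z.im| * |(inner ℝ β x : ℝ)| := by rw [abs_mul, abs_neg]
          _ ≤ (|z₀.im| + 1) * a := by
              refine mul_le_mul him ht (abs_nonneg _) (by positivity)
          _ = a * (|z₀.im| + 1) := mul_comm _ _
      refine mul_le_mul_of_nonneg_left ?_ (abs_nonneg _)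
      exact mul_le_mul ht hexp (Real.exp_pos _).le ha.le
  · exact (hint.abs.mul_const _)
  · -- differentiability of integrand
    filter_upwards with x
    intro z hz
    have : HasDerivAt (fun z : ℂ => Complex.I * z * ((inner ℝ β x : ℝ) : ℂ))
        (Complex.I * ((inner ℝ β x : ℝ) : ℂ)) z := by
      simpa using ((hasDerivAt_id z).const_mul Complex.I).mul_const (((inner ℝ β x : ℝ) : ℂ))
    have := (this.cexp)
    simpa [F', mul_comm, mul_left_comm, mul_assoc] using this.const_mul ((p x : ℂ))

lemma ptilde_neg (β : V3) (z : ℂ) : ptilde p (-β) z = ptilde p β (-z) := by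
  unfold ptilde
  congr 1
  funext x
  congr 2
  have : (inner ℝ (-β) x : ℝ) = -(inner ℝ β x : ℝ) := by
    simp [inner_neg_left]
  rw [this]
  push_cast
  ring

section PL

variable (ha : 0 < a) (hint : Integrable p)
    (hsupp : Function.support p ⊆ Metric.closedBall 0 a)

include ha hint hsupp

/-- Bound on the upper half plane, corner at `κ`. -/
lemma ptilde_bounded_upper (κ : ℝ) {C η₀ : ℝ} (hη₀ : 0 ≤ η₀)
    (hC : ∀ η : ℝ, η₀ ≤ η → ∀ β : V3, ‖β‖ = 1 → ‖ptilde p β ((κ : ℂ) + η * Complex.I)‖ ≤ C)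
    {β : V3} (hβ : ‖β‖ = 1) {z : ℂ} (hz : 0 ≤ z.im) :
    ‖ptilde p β z‖ ≤ max C ((∫ x, |p x|) * Real.exp (a * η₀)) := by
  set M : ℝ := ∫ x, |p x| with hM
  have hM0 : 0 ≤ M := integral_nonneg fun x => abs_nonneg _
  set C' : ℝ := max C (M * Real.exp (a * η₀)) with hC'
  set g : ℂ → ℂ := fun w => ptilde p β (w + κ) with hg
  have hgd : Differentiable ℂ g :=
    (ptilde_differentiable ha hint hsupp hβ).comp (differentiable_id.add_const _)
  have hgB : ∀ (S : Set ℂ), g =O[Bornology.cobounded ℂ ⊓ Filter.principal S]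
      fun w => Real.exp (a * ‖w‖ ^ (1 : ℝ)) := by
    intro S
    rw [Asymptotics.isBigO_iff]
    refine ⟨M * Real.exp (a * |κ|), Filter.Eventually.of_forall fun w => ?_⟩
    have h1 : ‖g w‖ ≤ M * Real.exp (a * |(w + (κ : ℂ)).im|) :=
      ptilde_bound ha hint hsupp hβ _
    have h2 : |(w + (κ : ℂ)).im| = |w.im| := by simp
    have h3 : |w.im| ≤ ‖w‖ := Complex.abs_im_le_norm w
    have h4 : ‖Real.exp (a * ‖w‖ ^ (1 : ℝ))‖ = Real.exp (a * ‖w‖) := by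
      rw [Real.rpow_one, Real.norm_eq_abs, abs_of_pos (Real.exp_pos _)]
    rw [h4]
    calc ‖g w‖ ≤ M * Real.exp (a * |w.im|) := by rw [← h2]; exact h1
      _ ≤ M * Real.exp (a * ‖w‖) := by
          refine mul_le_mul_of_nonneg_left (Real.exp_le_exp.2 ?_) hM0
          exact mul_le_mul_of_nonneg_left h3 ha.le
      _ ≤ (M * Real.exp (a * |κ|)) * Real.exp (a * ‖w‖) := by
          refine mul_le_mul_of_nonneg_right ?_ (Real.exp_pos _).le
          nlinarith [Real.one_le_exp (by positivity : (0:ℝ) ≤ a * |κ|)]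
  have hre : ∀ x : ℝ, ‖g x‖ ≤ C' := by
    intro x
    have h1 : ‖g x‖ ≤ M * Real.exp (a * |((x : ℂ) + κ).im|) :=
      ptilde_bound ha hint hsupp hβ _
    have h2 : |((x : ℂ) + (κ : ℂ)).im| = 0 := by simp
    rw [h2, mul_zero, Real.exp_zero, mul_one] at h1
    refine h1.trans (le_max_of_le_right ?_)
    nlinarith [Real.one_le_exp (by positivity : (0:ℝ) ≤ a * η₀)]
  have him : ∀ y : ℝ, 0 ≤ y → ‖g (y * Complex.I)‖ ≤ C' := by
    intro y hy
    have hval : (y : ℂ) * Complex.I + (κ : ℂ) = (κ : ℂ) + y * Complex.I := by ring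
    rcases le_or_gt η₀ y with h | h
    · have := hC y h β hβ
      rw [hg]
      simp only []
      rw [hval]
      exact this.trans (le_max_left _ _)
    · have h1 : ‖g (y * Complex.I)‖ ≤ M * Real.exp (a * |((y : ℂ) * Complex.I + κ).im|) :=
        ptilde_bound ha hint hsupp hβ _
      have h2 : ((y : ℂ) * Complex.I + (κ : ℂ)).im = y := by simp
      rw [h2, _root_.abs_of_nonneg hy] at h1
      refine h1.trans (le_max_of_le_right ?_)
      have : Real.exp (a * y) ≤ Real.exp (a * η₀) :=
        Real.exp_le_exp.2 (mul_le_mul_of_nonneg_left h.le ha.le)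
      nlinarith
  -- апply quadrants
  have hQ1 : ∀ w : ℂ, 0 ≤ w.re → 0 ≤ w.im → ‖g w‖ ≤ C' := by
    intro w hwre hwim
    refine PhragmenLindelof.quadrant_I (hgd.diffContOnCl) ?_ (fun x _ => hre x) (fun y hy => him y hy) hwre hwim
    exact ⟨1, one_lt_two, a, hgB _⟩
  have hQ2 : ∀ w : ℂ, w.re ≤ 0 → 0 ≤ w.im → ‖g w‖ ≤ C' := by
    intro w hwre hwim
    refine PhragmenLindelof.quadrant_II (hgd.diffContOnCl) ?_ (fun x _ => hre x) (fun y hy => him y hy) hwre hwim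
    exact ⟨1, one_lt_two, a, hgB _⟩
  have hzw : ptilde p β z = g (z - κ) := by rw [hg]; simp
  rw [hzw]
  rcases le_or_gt κ z.re with h | h
  · exact hQ1 _ (by simp [h]) (by simpa using hz)
  · exact hQ2 _ (by simp [h.le]) (by simpa using hz)

lemma ptilde_bounded_all (κ : ℝ) {C η₀ : ℝ} (hη₀ : 0 ≤ η₀)
    (hC : ∀ η : ℝ, η₀ ≤ η → ∀ β : V3, ‖β‖ = 1 → ‖ptilde p β ((κ : ℂ) + η * Complex.I)‖ ≤ C)
    {β : V3} (hβ : ‖β‖ = 1) (z : ℂ) :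
    ‖ptilde p β z‖ ≤ max C ((∫ x, |p x|) * Real.exp (a * η₀)) := by
  rcases le_or_gt 0 z.im with hz | hz
  · exact ptilde_bounded_upper ha hint hsupp κ hη₀ hC hβ hz
  · have hβ' : ‖-β‖ = 1 := by rwa [norm_neg]
    have : ptilde p β z = ptilde p (-β) (-z) := by rw [ptilde_neg]; simp
    rw [this]
    exact ptilde_bounded_upper ha hint hsupp κ hη₀ hC hβ' (by simp; linarith [hz])

end PL

/-- Riemann-Lebesgue along a ray. -/
lemma ptilde_tendsto_zero {β : V3} (hβ : ‖β‖ = 1) :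
    Tendsto (fun t : ℝ => ptilde p β (t : ℂ)) atTop (𝓝 0) := by
  have hRL := tendsto_integral_exp_inner_smul_cocompact (V := V3) (E := ℂ)
    (f := fun x => (p x : ℂ))
  set w : ℝ → V3 := fun t => (-(t / (2 * π))) • β with hw
  have hwten : Tendsto w atTop (cocompact V3) := by
    rw [← Metric.cobounded_eq_cocompact]
    rw [← tendsto_norm_atTop_iff_cobounded]
    have : ∀ t : ℝ, ‖w t‖ = |t| / (2 * π) := by
      intro t
      rw [hw]
      simp only [norm_smul, hβ, mul_one, Real.norm_eq_abs, abs_neg, abs_div]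
      congr 1
      rw [abs_of_pos (by positivity : (0:ℝ) < 2 * π)]
    refine Tendsto.congr' (Filter.Eventually.of_forall fun t => (this t).symm) ?_
    exact (tendsto_abs_atTop_atTop.comp tendsto_id).atTop_div_const (by positivity)
  have hcomp := hRL.comp hwten
  refine Tendsto.congr ?_ hcomp
  intro t
  show ∫ v : V3, 𝐞 (-⟪v, w t⟫) • ((p v : ℂ)) = ptilde p β t
  unfold ptilde
  congr 1
  funext v
  have hiw : -⟪v, w t⟫ = (t / (2 * π)) * ⟪v, β⟫ := by
    rw [hw]
    simp only [real_inner_smul_right]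
    ring
  have h3 : ⟪v, β⟫ = (inner ℝ β v : ℝ) := (real_inner_comm β v)
  have h2 : 2 * π * (t / (2 * π) * ⟪v, β⟫) = t * (inner ℝ β v : ℝ) := by
    rw [← h3]; field_simp
  have harg : ((2 * π * (t / (2 * π) * ⟪v, β⟫) : ℝ) : ℂ) * Complex.I
      = Complex.I * (t : ℂ) * ((inner ℝ β v : ℝ) : ℂ) := by
    rw [h2]; push_cast; ring
  rw [hiw, Circle.smul_def, Real.fourierChar_apply, harg, smul_eq_mul]
  exact mul_comm _ _

/-- If `ptilde p β` is bounded (and differentiable) then it vanishes identically. -/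
lemma ptilde_eq_zero_of_bounded (ha : 0 < a) (hint : Integrable p)
    (hsupp : Function.support p ⊆ Metric.closedBall 0 a)
    {β : V3} (hβ : ‖β‖ = 1) {C : ℝ} (hC : ∀ z : ℂ, ‖ptilde p β z‖ ≤ C) (z : ℂ) :
    ptilde p β z = 0 := by
  have hb : IsBounded (Set.range (ptilde p β)) := by
    rw [isBounded_iff_forall_norm_le]
    exact ⟨C, by rintro _ ⟨w, rfl⟩; exact hC w⟩
  have hconst : ∀ w : ℂ, ptilde p β w = ptilde p β 0 := fun w =>
    (ptilde_differentiable ha hint hsupp hβ).apply_eq_apply_of_bounded hb w 0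
  have hzero : ptilde p β 0 = 0 := by
    have h1 : Tendsto (fun t : ℝ => ptilde p β (t : ℂ)) atTop (𝓝 (ptilde p β 0)) := by
      refine Tendsto.congr (fun t => (hconst t).symm) tendsto_const_nhds
    exact tendsto_nhds_unique h1 (ptilde_tendsto_zero hβ)
  rw [hconst z, hzero]

/-- The complex-valued version of `p`. -/
noncomputable def pC (p : V3 → ℝ) : V3 → ℂ := fun x => (p x : ℂ)

lemma fourier_vanish (hzero : ∀ β : V3, ‖β‖ = 1 → ∀ t : ℝ, ptilde p β (t : ℂ) = 0) :
    ∀ w : V3, 𝓕 (pC p) w = 0 := by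
  intro w
  rw [Real.fourier_eq']
  rcases eq_or_ne w 0 with rfl | hw
  · have β₀ : V3 := EuclideanSpace.single 0 1
    have hβ₀ : ‖(EuclideanSpace.single (0 : Fin 3) (1:ℝ) : V3)‖ = 1 := by
      rw [EuclideanSpace.norm_single]; norm_num
    have h := hzero _ hβ₀ 0
    unfold ptilde at h
    rw [← h]
    congr 1
    funext v
    simp [pC]
  · set β : V3 := ‖w‖⁻¹ • w with hβdef
    have hwn : ‖w‖ ≠ 0 := norm_ne_zero_iff.2 hw
    have hβ : ‖β‖ = 1 := by
      rw [hβdef, norm_smul, norm_inv, norm_norm, inv_mul_cancel₀ hwn]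
    have h := hzero β hβ (-(2 * π * ‖w‖))
    unfold ptilde at h
    rw [← h]
    congr 1
    funext v
    rw [smul_eq_mul, mul_comm]
    congr 1
    have hib : (inner ℝ β v : ℝ) = ‖w‖⁻¹ * ⟪v, w⟫ := by
      rw [hβdef, real_inner_smul_left, real_inner_comm]
    have harg : (-2 * π * ⟪v, w⟫ : ℝ) = (-(2 * π * ‖w‖)) * (inner ℝ β v : ℝ) := by
      rw [hib]
      field_simp
    rw [harg]
    push_cast
    ring

/-- Smooth compactly supported functions give Schwartz maps. -/
noncomputable def gsMap (g : V3 → ℝ) (hg : ContDiff ℝ ((⊤ : ℕ∞) : WithTop ℕ∞) g) (hcs : HasCompactSupport g) :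
    SchwartzMap V3 ℂ where
  toFun x := (g x : ℂ)
  smooth' := Complex.ofRealCLM.contDiff.comp hg
  decay' k n := by
    have hgC : ContDiff ℝ ((⊤ : ℕ∞) : WithTop ℕ∞) (fun x : V3 => (g x : ℂ)) := Complex.ofRealCLM.contDiff.comp hg
    have hcsC : HasCompactSupport (fun x : V3 => (g x : ℂ)) := by
      refine hcs.comp_left (g := fun r : ℝ => (r : ℂ)) ?_
      simp
    have hder : HasCompactSupport (iteratedFDeriv ℝ n (fun x : V3 => (g x : ℂ))) :=
      hcsC.iteratedFDeriv n
    set φ : V3 → ℝ := fun x => ‖x‖ ^ k * ‖iteratedFDeriv ℝ n (fun x : V3 => (g x : ℂ)) x‖ with hφ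
    have hφc : Continuous φ := by
      refine ((continuous_norm.pow k)).mul ?_
      exact (hgC.continuous_iteratedFDeriv (by exact_mod_cast le_top)).norm
    have hφcs : HasCompactSupport φ := by
      refine HasCompactSupport.mul_left ?_
      exact hder.norm
    obtain ⟨C, hC⟩ := hφcs.exists_bound_of_continuous hφc
    exact ⟨C, fun x => (le_abs_self _).trans (by simpa [hφ, Real.norm_eq_abs] using hC x)⟩

lemma pC_integrable (hint : Integrable p) : Integrable (pC p) := hint.ofReal

lemma p_ae_zero (hint : Integrable p)
    (hF : ∀ w : V3, 𝓕 (pC p) w = 0) : p =ᵐ[volume] 0 := by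
  have hpCi : Integrable (pC p) := pC_integrable hint
  have hkey : ∀ᵐ x ∂(volume : Measure V3), pC p x = 0 := by
    refine ae_eq_zero_of_integral_contDiff_smul_eq_zero (hpCi.locallyIntegrable) ?_
    intro g hg hcs
    set gs : SchwartzMap V3 ℂ := gsMap g hg hcs with hgs
    set h : SchwartzMap V3 ℂ := (FourierTransform.fourierCLE ℂ (SchwartzMap V3 ℂ)).symm gs with hh
    have hgseq : ⇑gs = 𝓕 ⇑h := by
      have := FourierTransform.fourierCLE_apply (R := ℂ) (E := SchwartzMap V3 ℂ) (F := SchwartzMap V3 ℂ) h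
      rw [← SchwartzMap.fourier_coe, ← this, hh, ContinuousLinearEquiv.apply_symm_apply]
    have hflip : (innerₗ V3).flip = innerₗ V3 := by
      ext x y
      exact real_inner_comm x y
    have mult := VectorFourier.integral_fourierIntegral_smul_eq_flip
      (e := Real.fourierChar) (L := innerₗ V3) (μ := (volume : Measure V3))
      (ν := (volume : Measure V3)) (f := ⇑h) (g := pC p)
      Real.continuous_fourierChar continuous_inner h.integrable hpCi
    rw [hflip] at mult
    have hL : (fun ξ => VectorFourier.fourierIntegral Real.fourierChar volume (innerₗ V3) (⇑h) ξ)
        = 𝓕 ⇑h := rfl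
    have hR : (fun x => VectorFourier.fourierIntegral Real.fourierChar volume (innerₗ V3) (pC p) x)
        = 𝓕 (pC p) := rfl
    have hz : ∫ x, h x • (VectorFourier.fourierIntegral Real.fourierChar volume (innerₗ V3) (pC p) x) = 0 := by
      have : ∀ x, h x • (VectorFourier.fourierIntegral Real.fourierChar volume (innerₗ V3) (pC p) x) = 0 := by
        intro x
        have : VectorFourier.fourierIntegral Real.fourierChar volume (innerₗ V3) (pC p) x = 0 := hF x
        rw [this, smul_zero]
      simp only [this, integral_zero]
    rw [hz] at mult
    calc ∫ x, g x • pC p x = ∫ ξ, (𝓕 ⇑h) ξ • pC p ξ := by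
          congr 1
          funext x
          rw [← hgseq]
          have : gs x = (g x : ℂ) := rfl
          rw [this]
          rw [Complex.real_smul, smul_eq_mul]
      _ = 0 := mult
  filter_upwards [hkey] with x hx
  simpa [pC] using hx


end Stmt1Aux
end Stmt1Aux

theorem stmt_1 (a : ℝ) (ha : 0 < a)
    (p : EuclideanSpace ℝ (Fin 3) → ℝ) (hint : Integrable p)
    (hsupp : Function.support p ⊆ Metric.closedBall 0 a)
    (hp : ¬ (p =ᵐ[volume] 0)) (κ : ℝ) (hκ : 0 ≤ κ) :
    Filter.limsup
      (fun η : ℝ => ⨆ β : Metric.sphere (0 : EuclideanSpace ℝ (Fin 3)) 1,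
        (‖ptilde p (β : EuclideanSpace ℝ (Fin 3)) (κ + η * Complex.I)‖₊ : ℝ≥0∞))
      Filter.atTop = ⊤ := by
  by_contra hne
  have hlt : Filter.limsup
      (fun η : ℝ => ⨆ β : Metric.sphere (0 : EuclideanSpace ℝ (Fin 3)) 1,
        (‖ptilde p (β : EuclideanSpace ℝ (Fin 3)) (κ + η * Complex.I)‖₊ : ℝ≥0∞))
      Filter.atTop < ⊤ := lt_top_iff_ne_top.2 hne
  obtain ⟨D, hD1, hD2⟩ := exists_between hlt
  have hev := Filter.eventually_lt_of_limsup_lt hD1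
  obtain ⟨η₀, hη₀⟩ := Filter.eventually_atTop.1 hev
  set η₁ : ℝ := max η₀ 0 with hη₁
  set C : ℝ := D.toReal with hCdef
  have hCb : ∀ η : ℝ, η₁ ≤ η → ∀ β : Stmt1Aux.V3, ‖β‖ = 1 →
      ‖ptilde p β ((κ : ℂ) + η * Complex.I)‖ ≤ C := by
    intro η hη β hβ
    have hmem : β ∈ Metric.sphere (0 : Stmt1Aux.V3) 1 := by
      rwa [mem_sphere_zero_iff_norm]
    have h1 : (‖ptilde p β ((κ : ℂ) + η * Complex.I)‖₊ : ℝ≥0∞) ≤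
        ⨆ b : Metric.sphere (0 : EuclideanSpace ℝ (Fin 3)) 1,
          (‖ptilde p (b : EuclideanSpace ℝ (Fin 3)) (κ + η * Complex.I)‖₊ : ℝ≥0∞) :=
      le_iSup (fun b : Metric.sphere (0 : EuclideanSpace ℝ (Fin 3)) 1 =>
        (‖ptilde p (b : EuclideanSpace ℝ (Fin 3)) (κ + η * Complex.I)‖₊ : ℝ≥0∞)) ⟨β, hmem⟩
    have h2 := (h1.trans_lt (hη₀ η (le_trans (le_max_left _ _) hη))).le
    have h3 := ENNReal.toReal_mono hD2.ne h2
    simpa [ENNReal.coe_toReal, coe_nnnorm] using h3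
  have hbd : ∀ β : Stmt1Aux.V3, ‖β‖ = 1 → ∀ z : ℂ,
      ‖ptilde p β z‖ ≤ max C ((∫ x, |p x|) * Real.exp (a * η₁)) :=
    fun β hβ z => Stmt1Aux.ptilde_bounded_all ha hint hsupp κ (le_max_right _ _) hCb hβ z
  have hzero : ∀ β : Stmt1Aux.V3, ‖β‖ = 1 → ∀ t : ℝ, ptilde p β (t : ℂ) = 0 := fun β hβ t =>
    Stmt1Aux.ptilde_eq_zero_of_bounded ha hint hsupp hβ (hbd β hβ) t
  exact hp (Stmt1Aux.p_ae_zero hint (Stmt1Aux.fourier_vanish hzero))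
end

section
/- Let a > 0, let g : ℝ → ℂ be integrable with support contained in [−a, a], and let c ∈ ℂ. If ∫_ℝ g(λ) e^{i z λ} dλ = c for every z ∈ ℂ, then c = 0 and g = 0 almost everywhere. -/
open MeasureTheory Complex FourierTransform Real Filter
open scoped ContDiff

set_option maxHeartbeats 1000000

lemma aux_schwartz {φ : ℝ → ℂ} (h1 : ContDiff ℝ ∞ φ) (h2 : HasCompactSupport φ) :
    Integrable (𝓕 φ) := by
  let S : SchwartzMap ℝ ℂ :=
    { toFun := φ
      smooth' := h1
      decay' := by
        intro k n
        have hcs : HasCompactSupport (fun x : ℝ => ‖x‖ ^ k * ‖iteratedFDeriv ℝ n φ x‖) := by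
          apply HasCompactSupport.mono (HasCompactSupport.norm (h2.iteratedFDeriv (𝕜 := ℝ) n))
          intro x hx
          simp only [Function.mem_support] at *
          intro h
          apply hx
          simp [h]
        have hcont : Continuous (fun x : ℝ => ‖x‖ ^ k * ‖iteratedFDeriv ℝ n φ x‖) :=
          (continuous_norm.pow k).mul
            (h1.continuous_iteratedFDeriv (by exact_mod_cast le_top)).norm
        obtain ⟨C, hC⟩ := hcs.exists_bound_of_continuous hcont
        exact ⟨C, fun x => (le_abs_self _).trans ((Real.norm_eq_abs _) ▸ hC x)⟩ }
  have : 𝓕 φ = (SchwartzMap.fourierTransformCLM ℝ S : ℝ → ℂ) := by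
    rw [SchwartzMap.fourierTransformCLM_apply]; rfl
  rw [this]
  exact (SchwartzMap.fourierTransformCLM ℝ S).integrable

theorem stmt_5 (a : ℝ) (ha : 0 < a)
    (g : ℝ → ℂ) (hint : Integrable g)
    (hsupp : Function.support g ⊆ Set.Icc (-a) a)
    (c : ℂ)
    (hconst : ∀ z : ℂ, (∫ l : ℝ, g l * Complex.exp (Complex.I * z * (l : ℂ))) = c) :
    c = 0 ∧ g =ᵐ[volume] 0 := by
  -- Fourier transform of g is constant c
  have hF : ∀ ξ : ℝ, 𝓕 g ξ = c := by
    intro ξ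
    rw [Real.fourier_eq']
    rw [← hconst ((-2 * π * ξ : ℝ) : ℂ)]
    apply integral_congr_ae
    filter_upwards with v
    rw [smul_eq_mul, mul_comm]
    congr 1
    have : (inner ℝ v ξ : ℝ) = v * ξ := by rw [RCLike.inner_apply', conj_trivial]
    rw [this]
    push_cast
    ring_nf
  have hc : c = 0 := by
    have h1 : Tendsto (fun _ : ℝ => c) (cocompact ℝ) (nhds (0 : ℂ)) := by
      have h2 := Real.zero_at_infty_fourier g
      have : (𝓕 g) = (fun _ : ℝ => c) := funext hF
      rwa [this] at h2
    exact tendsto_nhds_unique tendsto_const_nhds h1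
  refine ⟨hc, ?_⟩
  subst hc
  apply ae_eq_zero_of_integral_contDiff_smul_eq_zero hint.locallyIntegrable
  intro φ hφ1 hφ2
  set Φ : ℝ → ℂ := fun x => (φ x : ℂ) with hΦdef
  have hΦ1 : ContDiff ℝ ∞ Φ := Complex.ofRealCLM.contDiff.comp hφ1
  have hΦ2 : HasCompactSupport Φ := hφ2.comp_left (g := fun r : ℝ => (r : ℂ)) (by simp)
  have hΦint : Integrable Φ := hΦ1.continuous.integrable_of_hasCompactSupport hΦ2
  have hFint : Integrable (𝓕 Φ) := aux_schwartz hΦ1 hΦ2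
  set F : ℝ → ℝ → ℂ := fun x ξ =>
    Complex.exp ((2 * π * (ξ * x) : ℝ) * Complex.I) * (𝓕 Φ ξ * g x) with hFdef
  have hinv : ∀ x : ℝ, Φ x = ∫ ξ : ℝ, Complex.exp ((2 * π * (ξ * x) : ℝ) * Complex.I) • 𝓕 Φ ξ := by
    intro x
    have h := hΦ1.continuous.fourierInv_fourier_eq hΦint hFint
    conv_lhs => rw [← h]
    rw [Real.fourierInv_eq']
    simp only [RCLike.inner_apply', conj_trivial]
  have hFub : Integrable (Function.uncurry F) (volume.prod volume) := by
    apply Integrable.bdd_mul (c := 1)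
    · have h0 : Integrable (fun p : ℝ × ℝ => g p.1 * 𝓕 Φ p.2) (volume.prod volume) :=
        hint.mul_prod hFint
      exact h0.congr (Filter.Eventually.of_forall fun p => mul_comm _ _)
    · apply Continuous.aestronglyMeasurable
      fun_prop
    · refine Filter.Eventually.of_forall (fun p => ?_)
      simp [Complex.norm_exp]
  calc ∫ x : ℝ, φ x • g x
      = ∫ x : ℝ, ∫ ξ : ℝ, F x ξ := by
        apply integral_congr_ae
        filter_upwards with x
        have : φ x • g x = Φ x * g x := by
          simp [hΦdef, Complex.real_smul]
        rw [this, hinv x, ← integral_mul_const]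
        apply integral_congr_ae
        filter_upwards with ξ
        simp only [hFdef, smul_eq_mul]
        ring
    _ = ∫ ξ : ℝ, ∫ x : ℝ, F x ξ := integral_integral_swap hFub
    _ = 0 := by
        have : ∀ ξ : ℝ, (∫ x : ℝ, F x ξ) = 0 := by
          intro ξ
          have h1 : (∫ x : ℝ, F x ξ) = 𝓕 Φ ξ * ∫ x : ℝ, g x * Complex.exp (Complex.I * ((2 * π * ξ : ℝ) : ℂ) * (x : ℂ)) := by
            rw [← integral_const_mul]
            apply integral_congr_ae
            filter_upwards with x
            simp only [hFdef]
            rw [show ((2 * π * (ξ * x) : ℝ) : ℂ) * Complex.I = Complex.I * ((2 * π * ξ : ℝ) : ℂ) * (x : ℂ) by push_cast; ring]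
            ring
          rw [h1, hconst, mul_zero]
        simp only [this, integral_zero]
end

section
/- Let a > 0, let p : ℝ³ → ℝ be integrable with support contained in the closed ball B̄_a = {x ∈ ℝ³ : |x| ≤ a}, and fix η ∈ ℝ. Then lim_{κ→+∞} sup_{β ∈ S²} |p̃((κ + iη)β)| = 0. -/
open MeasureTheory Complex Filter
open Topology

private abbrev V3 := EuclideanSpace ℝ (Fin 3)

private lemma l1_translate (p : V3 → ℝ) (hint : Integrable p)
    {ε : ℝ} (hε : 0 < ε) :
    ∃ δ > 0, ∀ v : V3, ‖v‖ ≤ δ → (∫ x, |p (x + v) - p x|) ≤ ε := by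
  obtain ⟨g, hgsupp, hgL1, hgcont, hgint⟩ :=
    hint.exists_hasCompactSupport_integral_sub_le (μ := volume) (show (0:ℝ) < ε/4 by positivity)
  have hgu : UniformContinuous g := hgsupp.uniformContinuous_of_continuous hgcont
  obtain ⟨R, hR0, hRg⟩ := hgsupp.exists_pos_le_norm
  set K := (volume (Metric.closedBall (0:V3) (R+1))).toReal with hK
  have hK0 : 0 ≤ K := ENNReal.toReal_nonneg
  set ε' := ε / (2 * (K + 1)) with hε'def
  have hε' : 0 < ε' := by positivity
  obtain ⟨δ₀, hδ₀, hδ₀u⟩ := Metric.uniformContinuous_iff.mp hgu ε' hε'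
  refine ⟨min (δ₀/2) 1, by positivity, fun v hv => ?_⟩
  have hv1 : ‖v‖ ≤ 1 := hv.trans (min_le_right _ _)
  have hvδ : ‖v‖ < δ₀ := lt_of_le_of_lt (hv.trans (min_le_left _ _)) (by linarith)
  have hint_v : Integrable (fun x => p (x + v)) := hint.comp_add_right v
  have hgint_v : Integrable (fun x => g (x + v)) := hgint.comp_add_right v
  -- pointwise bound
  have hpt : ∀ x, |p (x + v) - p x| ≤
      ‖p (x + v) - g (x + v)‖ + (|g (x + v) - g x| + ‖p x - g x‖) := by
    intro x
    have : p (x + v) - p x = (p (x+v) - g (x+v)) + ((g (x+v) - g x) - (p x - g x)) := by ring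
    rw [this]
    calc |(p (x+v) - g (x+v)) + ((g (x+v) - g x) - (p x - g x))|
        ≤ |p (x+v) - g (x+v)| + |(g (x+v) - g x) - (p x - g x)| := abs_add_le _ _
      _ ≤ |p (x+v) - g (x+v)| + (|g (x+v) - g x| + |p x - g x|) := by
          gcongr; exact abs_sub _ _
  have hI1 : Integrable (fun x => ‖p (x + v) - g (x + v)‖) := (hint_v.sub hgint_v).norm
  have hI2 : Integrable (fun x => |g (x + v) - g x|) := (hgint_v.sub hgint).abs
  have hI3 : Integrable (fun x => ‖p x - g x‖) := (hint.sub hgint).norm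
  have step : (∫ x, |p (x + v) - p x|) ≤
      (∫ x, ‖p (x + v) - g (x + v)‖) + ((∫ x, |g (x + v) - g x|) + ∫ x, ‖p x - g x‖) := by
    calc (∫ x, |p (x + v) - p x|)
        ≤ ∫ x, (‖p (x + v) - g (x + v)‖ + (|g (x + v) - g x| + ‖p x - g x‖)) :=
          integral_mono (hint_v.sub hint).abs (hI1.add (hI2.add hI3)) hpt
      _ = _ := by
          rw [integral_add (f := fun x => ‖p (x + v) - g (x + v)‖)
              (g := fun x => |g (x + v) - g x| + ‖p x - g x‖) hI1 (hI2.add hI3),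
            integral_add hI2 hI3]
  have e1 : (∫ x, ‖p (x + v) - g (x + v)‖) = ∫ x, ‖p x - g x‖ :=
    integral_add_right_eq_self (fun x => ‖p x - g x‖) v
  have e2 : (∫ x, |g (x + v) - g x|) ≤ ε' * K := by
    have hptw : ∀ x, |g (x + v) - g x| ≤
        Set.indicator (Metric.closedBall (0:V3) (R+1)) (fun _ => ε') x := by
      intro x
      by_cases hx : x ∈ Metric.closedBall (0:V3) (R+1)
      · rw [Set.indicator_of_mem hx]
        have : dist (x + v) x < δ₀ := by
          rw [dist_eq_norm]
          simpa using hvδ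
        exact le_of_lt (by simpa [Real.dist_eq] using hδ₀u this)
      · rw [Set.indicator_of_notMem hx]
        have hxn : R + 1 < ‖x‖ := by
          simpa [Metric.mem_closedBall, dist_zero_right, not_le] using hx
        have h1 : g x = 0 := hRg x (by linarith)
        have h2 : g (x + v) = 0 := by
          refine hRg _ ?_
          have h3 : ‖x‖ ≤ ‖x + v‖ + ‖v‖ := by
            have := norm_add_le (x + v) (-v)
            simpa using this
          linarith
        simp [h1, h2]
    have hIind : Integrable
        (Set.indicator (Metric.closedBall (0:V3) (R+1)) (fun _ => ε')) := by
      rw [integrable_indicator_iff measurableSet_closedBall]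
      exact integrableOn_const measure_closedBall_lt_top.ne
    calc (∫ x, |g (x + v) - g x|)
        ≤ ∫ x, Set.indicator (Metric.closedBall (0:V3) (R+1)) (fun _ => ε') x :=
          integral_mono hI2 hIind hptw
      _ = ε' * K := by
          rw [integral_indicator_const _ measurableSet_closedBall, smul_eq_mul, mul_comm, hK]; rfl
  have e3 : ε' * K ≤ ε / 2 := by
    rw [hε'def]
    rw [div_mul_eq_mul_div, div_le_iff₀ (by positivity)]
    ring_nf
    nlinarith
  calc (∫ x, |p (x + v) - p x|) ≤ _ := step
    _ ≤ ε/4 + (ε' * K + ε/4) := by rw [e1]; gcongr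
    _ ≤ ε := by linarith

private lemma key_bound (a : ℝ) (ha : 0 < a) (p : V3 → ℝ) (hint : Integrable p)
    (hsupp : Function.support p ⊆ Metric.closedBall 0 a) (η : ℝ)
    {κ : ℝ} (hκ : Real.pi ≤ κ) {β : V3} (hβ : ‖β‖ = 1) :
    2 * ‖ptilde p β (κ + η * Complex.I)‖ ≤
      Real.exp (|η| * (a + 1)) *
        ((∫ x, |p (x + (Real.pi / κ) • β) - p x|) +
          |1 - Real.exp (-(η * (Real.pi / κ)))| * ∫ x, |p x|) := by
  have hκ0 : 0 < κ := lt_of_lt_of_le Real.pi_pos hκ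
  set c : ℝ := Real.pi / κ with hcdef
  have hc0 : 0 < c := by positivity
  have hc1 : c ≤ 1 := by rw [hcdef, div_le_one hκ0]; exact hκ
  have hκc : κ * c = Real.pi := by rw [hcdef]; field_simp
  set v : V3 := c • β with hvdef
  have hvn : ‖v‖ = c := by rw [hvdef, norm_smul, hβ, mul_one, Real.norm_eq_abs, abs_of_pos hc0]
  set z : ℂ := (κ : ℂ) + η * Complex.I with hz
  set s : ℝ := Real.exp (-(η * c)) with hsdef
  set C : ℝ := Real.exp (|η| * (a + 1)) with hCdef
  have hC0 : 0 < C := Real.exp_pos _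
  set E : V3 → ℂ := fun x => Complex.exp (Complex.I * z * ((inner ℝ β x : ℝ) : ℂ)) with hE
  have hptilde : ptilde p β z = ∫ x, (p x : ℂ) * E x := rfl
  -- modulus of E
  have hre : ∀ t : ℝ, (Complex.I * z * (t : ℂ)).re = -(η * t) := by
    intro t
    simp [hz, Complex.mul_re, Complex.mul_im]
    try ring
  have habsE : ∀ x, ‖E x‖ = Real.exp (-(η * (inner ℝ β x : ℝ))) := by
    intro x; rw [hE]; rw [Complex.norm_exp, hre]
  have hEbound : ∀ x : V3, ‖x‖ ≤ a + 1 → ‖E x‖ ≤ C := by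
    intro x hx
    rw [habsE]
    apply Real.exp_le_exp.2
    have h1 : |(inner ℝ β x : ℝ)| ≤ a + 1 := by
      calc |(inner ℝ β x : ℝ)| ≤ ‖β‖ * ‖x‖ := abs_real_inner_le_norm β x
        _ = ‖x‖ := by rw [hβ, one_mul]
        _ ≤ a + 1 := hx
    calc -(η * (inner ℝ β x : ℝ)) ≤ |η * (inner ℝ β x : ℝ)| := neg_le_abs _
      _ = |η| * |(inner ℝ β x : ℝ)| := abs_mul _ _
      _ ≤ |η| * (a + 1) := mul_le_mul_of_nonneg_left h1 (abs_nonneg _)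
  have hmono : ∀ (q : V3 → ℝ), (∀ x, q x ≠ 0 → ‖x‖ ≤ a + 1) →
      ∀ x, ‖(q x : ℂ) * E x‖ ≤ C * |q x| := by
    intro q hq x
    by_cases h : q x = 0
    · simp [h]
    · rw [norm_mul, Complex.norm_real, Real.norm_eq_abs]
      calc |q x| * ‖E x‖ ≤ |q x| * C :=
            mul_le_mul_of_nonneg_left (hEbound x (hq x h)) (abs_nonneg _)
        _ = C * |q x| := mul_comm _ _
  have hEcont : Continuous E := by
    rw [hE]
    exact Complex.continuous_exp.comp ((continuous_const).mul
      (Complex.continuous_ofReal.comp ((continuous_const).inner continuous_id)))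
  have hmul_int : ∀ (q : V3 → ℝ), Integrable q → (∀ x, q x ≠ 0 → ‖x‖ ≤ a + 1) →
      Integrable (fun x => (q x : ℂ) * E x) := by
    intro q hq hsup
    refine (hq.norm.const_mul C).mono' ?_ (Filter.Eventually.of_forall (hmono q hsup))
    exact (Complex.continuous_ofReal.comp_aestronglyMeasurable hq.aestronglyMeasurable).mul
      hEcont.aestronglyMeasurable
  -- support facts
  have hsupp' : ∀ x, p x ≠ 0 → ‖x‖ ≤ a := fun x hx => by
    simpa [Metric.mem_closedBall, dist_zero_right] using hsupp (Function.mem_support.2 hx)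
  have hsup1 : ∀ x, p x ≠ 0 → ‖x‖ ≤ a + 1 := fun x hx => (hsupp' x hx).trans (by linarith)
  have hsup2 : ∀ x : V3, p (x + v) ≠ 0 → ‖x‖ ≤ a + 1 := by
    intro x hx
    have h1 : ‖x + v‖ ≤ a := hsupp' _ hx
    have h3 : ‖x‖ ≤ ‖x + v‖ + ‖v‖ := by
      have := norm_add_le (x + v) (-v); simpa using this
    rw [hvn] at h3; linarith
  have hint_v : Integrable (fun x => p (x + v)) := hint.comp_add_right v
  have hI1 : Integrable (fun x => (p x : ℂ) * E x) := hmul_int p hint hsup1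
  have hI2 : Integrable (fun x => ((p (x + v) : ℝ) : ℂ) * E x) :=
    hmul_int (fun x => p (x + v)) hint_v hsup2
  -- shift identity
  have hinner : ∀ x : V3, (inner ℝ β (x + v) : ℝ) = (inner ℝ β x : ℝ) + c := by
    intro x
    rw [inner_add_right, hvdef, real_inner_smul_right, real_inner_self_eq_norm_sq, hβ]
    ring
  have hEc : Complex.exp (Complex.I * z * (c : ℂ)) = -(s : ℂ) := by
    have h1 : Complex.I * z * (c : ℂ) = ((κ * c : ℝ) : ℂ) * Complex.I + ((-(η * c) : ℝ) : ℂ) := by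
      simp [hz, Complex.ext_iff, Complex.mul_re, Complex.mul_im]
      try constructor <;> ring
      try ring
    rw [h1, hκc, Complex.exp_add, Complex.exp_pi_mul_I, ← Complex.ofReal_exp, ← hsdef]
    ring
  have hEshift : ∀ x : V3, E (x + v) = E x * (-(s : ℂ)) := by
    intro x
    rw [hE]
    simp only
    rw [show ((inner ℝ β (x + v) : ℝ) : ℂ) = ((inner ℝ β x : ℝ) : ℂ) + (c : ℂ) by
      rw [hinner]; push_cast; ring]
    rw [mul_add, Complex.exp_add, hEc]
  have hshift : (∫ x, (p x : ℂ) * E x) = (∫ x, ((p (x + v) : ℝ) : ℂ) * E x) * (-(s : ℂ)) := by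
    have h0 := integral_add_right_eq_self (μ := volume) (fun x : V3 => (p x : ℂ) * E x) v
    rw [← h0]
    simp only [hEshift, ← mul_assoc]
    rw [integral_mul_const]
  have hT2 : (2 : ℂ) * ∫ x, (p x : ℂ) * E x
      = ∫ x, (((p x : ℝ) : ℂ) - (s : ℂ) * ((p (x + v) : ℝ) : ℂ)) * E x := by
    have hsub : ∫ x, (((p x : ℝ) : ℂ) - (s : ℂ) * ((p (x + v) : ℝ) : ℂ)) * E x
        = (∫ x, (p x : ℂ) * E x) - (s : ℂ) * ∫ x, ((p (x + v) : ℝ) : ℂ) * E x := by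
      simp only [sub_mul, mul_assoc]
      rw [integral_sub hI1 (hI2.const_mul _), integral_const_mul]
    rw [hsub, hshift]
    ring
  -- the bound
  have hq_int : Integrable (fun x : V3 => p x - s * p (x + v)) := hint.sub (hint_v.const_mul s)
  have hq_supp : ∀ x : V3, (p x - s * p (x + v)) ≠ 0 → ‖x‖ ≤ a + 1 := by
    intro x hx
    by_cases h1 : p x = 0
    · have h2 : p (x + v) ≠ 0 := by
        intro h2; exact hx (by rw [h1, h2]; ring)
      exact hsup2 x h2
    · exact hsup1 x h1
  have hcast : ∀ x : V3, (((p x : ℝ) : ℂ) - (s : ℂ) * ((p (x + v) : ℝ) : ℂ))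
      = (((p x - s * p (x + v) : ℝ)) : ℂ) := by
    intro x; push_cast; ring
  have habs_pt : ∀ x : V3, ‖(((p x - s * p (x + v) : ℝ)) : ℂ) * E x‖ ≤
      C * (|p (x + v) - p x| + |1 - s| * |p (x + v)|) := by
    intro x
    calc ‖(((p x - s * p (x + v) : ℝ)) : ℂ) * E x‖
        ≤ C * |p x - s * p (x + v)| := hmono _ hq_supp x
      _ ≤ C * (|p (x + v) - p x| + |1 - s| * |p (x + v)|) := by
          apply mul_le_mul_of_nonneg_left _ (le_of_lt hC0)
          have : p x - s * p (x + v) = -(p (x + v) - p x) + (1 - s) * p (x + v) := by ring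
          rw [this]
          calc |(-(p (x + v) - p x)) + (1 - s) * p (x + v)|
              ≤ |(-(p (x + v) - p x))| + |(1 - s) * p (x + v)| := abs_add_le _ _
            _ = |p (x + v) - p x| + |1 - s| * |p (x + v)| := by rw [abs_neg, abs_mul]
  have hIlhs : Integrable (fun x : V3 => ‖(((p x - s * p (x + v) : ℝ)) : ℂ) * E x‖) :=
    (hmul_int _ hq_int hq_supp).norm
  have hIrhs1 : Integrable (fun x : V3 => |p (x + v) - p x|) := (hint_v.sub hint).abs
  have hIrhs2 : Integrable (fun x : V3 => |1 - s| * |p (x + v)|) := (hint_v.abs.const_mul _)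
  have key : 2 * ‖ptilde p β z‖ ≤
      C * ((∫ x, |p (x + v) - p x|) + |1 - s| * ∫ x, |p x|) := by
    have h1 : 2 * ‖ptilde p β z‖
        = ‖(2 : ℂ) * ∫ x, (p x : ℂ) * E x‖ := by
      rw [hptilde, norm_mul]; norm_num
    rw [h1, hT2]
    simp only [hcast]
    calc ‖∫ x, (((p x - s * p (x + v) : ℝ)) : ℂ) * E x‖
        = ‖∫ x, (((p x - s * p (x + v) : ℝ)) : ℂ) * E x‖ := rfl
      _ ≤ ∫ x, ‖(((p x - s * p (x + v) : ℝ)) : ℂ) * E x‖ := norm_integral_le_integral_norm _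
      _ ≤ ∫ x, C * (|p (x + v) - p x| + |1 - s| * |p (x + v)|) := by
          apply integral_mono hIlhs ((hIrhs1.add hIrhs2).const_mul C) habs_pt
      _ = C * ((∫ x, |p (x + v) - p x|) + |1 - s| * ∫ x, |p (x + v)|) := by
          rw [MeasureTheory.integral_const_mul, integral_add hIrhs1 hIrhs2, MeasureTheory.integral_const_mul]
      _ = C * ((∫ x, |p (x + v) - p x|) + |1 - s| * ∫ x, |p x|) := by
          rw [integral_add_right_eq_self (μ := volume) (fun x : V3 => |p x|) v]
  exact key

theorem stmt_8 (a : ℝ) (ha : 0 < a)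
    (p : EuclideanSpace ℝ (Fin 3) → ℝ) (hint : Integrable p)
    (hsupp : Function.support p ⊆ Metric.closedBall 0 a) (η : ℝ) :
    Filter.Tendsto
      (fun κ : ℝ => ⨆ β : Metric.sphere (0 : EuclideanSpace ℝ (Fin 3)) 1,
        ‖ptilde p (β : EuclideanSpace ℝ (Fin 3)) (κ + η * Complex.I)‖)
      Filter.atTop (nhds 0) := by
  rw [Metric.tendsto_nhds]
  intro ε hε
  set C : ℝ := Real.exp (|η| * (a + 1)) with hC
  have hC0 : 0 < C := Real.exp_pos _
  set L : ℝ := ∫ x, |p x| with hLdef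
  have hL0 : 0 ≤ L := integral_nonneg fun x => abs_nonneg _
  obtain ⟨δ, hδ0, hδ⟩ := l1_translate p hint (show (0:ℝ) < ε / (2 * C) by positivity)
  have hev1 : ∀ᶠ κ : ℝ in atTop,
      |1 - Real.exp (-(η * (Real.pi / κ)))| < ε / (2 * C * (L + 1)) := by
    have h1 : Tendsto (fun κ : ℝ => Real.pi / κ) atTop (𝓝 0) := by
      simpa [div_eq_mul_inv] using tendsto_inv_atTop_zero.const_mul Real.pi
    have h2 : Tendsto (fun κ : ℝ => Real.exp (-(η * (Real.pi / κ)))) atTop (𝓝 1) := by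
      have h0 : Tendsto (fun κ : ℝ => -(η * (Real.pi / κ))) atTop (𝓝 0) := by
        simpa using (h1.const_mul η).neg
      have := (Real.continuous_exp.tendsto 0).comp h0
      simpa [Function.comp_def] using this
    have h3 : Tendsto (fun κ : ℝ => |1 - Real.exp (-(η * (Real.pi / κ)))|) atTop (𝓝 0) := by
      have := ((tendsto_const_nhds (x := (1:ℝ)) (f := atTop)).sub h2).abs
      simpa using this
    exact h3.eventually_lt_const (by positivity)
  have hev2 : ∀ᶠ κ : ℝ in atTop, Real.pi ≤ κ := eventually_ge_atTop _
  have hev3 : ∀ᶠ κ : ℝ in atTop, Real.pi / κ ≤ δ := by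
    filter_upwards [eventually_ge_atTop (max 1 (Real.pi / δ))] with κ hκ
    have hκ1 : (1:ℝ) ≤ κ := le_trans (le_max_left _ _) hκ
    have hκ2 : Real.pi / δ ≤ κ := le_trans (le_max_right _ _) hκ
    have hpd := (div_le_iff₀ hδ0).1 hκ2
    rw [div_le_iff₀ (by linarith), mul_comm]
    linarith
  filter_upwards [hev1, hev2, hev3] with κ h1 h2 h3
  have hκ0 : 0 < κ := lt_of_lt_of_le Real.pi_pos h2
  haveI : Nonempty (Metric.sphere (0 : V3) 1) :=
    (NormedSpace.sphere_nonempty.mpr zero_le_one).to_subtype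
  have hβbound : ∀ β : Metric.sphere (0 : V3) 1,
      ‖ptilde p (β : V3) (κ + η * Complex.I)‖ ≤ ε / 2 := by
    intro β
    have hβ : ‖(β : V3)‖ = 1 := by
      simpa using mem_sphere_zero_iff_norm.1 β.2
    have hk := key_bound a ha p hint hsupp η h2 hβ
    rw [← hC, ← hLdef] at hk
    have hA : (∫ x, |p (x + (Real.pi / κ) • (β : V3)) - p x|) ≤ ε / (2 * C) := by
      apply hδ
      rw [norm_smul, hβ, mul_one, Real.norm_eq_abs, abs_of_pos (by positivity)]
      exact h3
    have hB : |1 - Real.exp (-(η * (Real.pi / κ)))| * L ≤ ε / (2 * C) := by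
      calc |1 - Real.exp (-(η * (Real.pi / κ)))| * L ≤ (ε / (2 * C * (L + 1))) * L := by
            exact mul_le_mul_of_nonneg_right (le_of_lt h1) hL0
        _ ≤ ε / (2 * C) := by
            rw [div_mul_eq_mul_div, div_le_div_iff₀ (by positivity) (by positivity)]
            nlinarith
    have hsum := mul_le_mul_of_nonneg_left (add_le_add hA hB) (le_of_lt hC0)
    have hCε : C * (ε / (2 * C) + ε / (2 * C)) = ε := by
      field_simp
      ring
    linarith [hk, hsum]
  have hSle : (⨆ β : Metric.sphere (0 : V3) 1,
      ‖ptilde p (β : V3) (κ + η * Complex.I)‖) ≤ ε / 2 := ciSup_le hβbound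
  have hSnn : 0 ≤ ⨆ β : Metric.sphere (0 : V3) 1,
      ‖ptilde p (β : V3) (κ + η * Complex.I)‖ :=
    Real.iSup_nonneg fun β => norm_nonneg _
  rw [Real.dist_eq, sub_zero, _root_.abs_of_nonneg hSnn]
  linarith
end

section
/- Let a > 0, let ℓ ≥ 4 be a natural number, and fix a unit vector β ∈ S² ⊂ ℝ³. For κ > 1 set η(κ) := a⁻¹ ln κ and define J(κ) := ∫_{ℝ³} ds / ( | ‖s‖² − (κ + iη(κ)) (β·s) |_ℂ · ( 1 + η(κ)² + ‖κβ − s‖² )^{ℓ/2} ), where | · |_ℂ denotes the complex absolute value and β·s the Euclidean inner product. Then lim_{κ→+∞} κ · J(κ) = 0. -/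
open MeasureTheory Complex Filter Set Metric
open MeasureTheory Complex Filter Set Metric

local notation "E3" => EuclideanSpace ℝ (Fin 3)

lemma integrable_radial {f : ℝ → ℝ} (hi : IntegrableOn (fun r : ℝ => r ^ 2 * f r) (Set.Ioi 0)) :
    Integrable (fun x : E3 => f ‖x‖) := by
  set μ : Measure E3 := volume with hμ
  have hdim : Module.finrank ℝ E3 = 3 := finrank_euclideanSpace_fin
  have key := μ.measurePreserving_homeomorphUnitSphereProd
  rw [hdim] at key
  -- reduce to the complement of 0
  rw [← MeasureTheory.restrict_compl_singleton (μ := μ) (0 : E3)]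
  rw [show (Integrable (fun x : E3 => f ‖x‖) (μ.restrict {(0:E3)}ᶜ)) =
      IntegrableOn (fun x : E3 => f ‖x‖) {(0:E3)}ᶜ μ from rfl]
  have hmeas : MeasurableSet ({(0:E3)}ᶜ) := (measurableSet_singleton _).compl
  rw [IntegrableOn, ← map_comap_subtype_coe hmeas,
    (MeasurableEmbedding.subtype_coe hmeas).integrable_map_iff]
  have hcomp : ((fun x : E3 => f ‖x‖) ∘ (Subtype.val : ({(0:E3)}ᶜ : Set E3) → E3)) =
      (fun p : sphere (0:E3) 1 × Set.Ioi (0:ℝ) => f p.2.1) ∘ (homeomorphUnitSphereProd E3) := by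
    funext x
    simp
  rw [hcomp]
  rw [key.integrable_comp_emb (Homeomorph.measurableEmbedding _)]
  have h2 : Integrable (fun r : Set.Ioi (0:ℝ) => f r.1) (Measure.volumeIoiPow (3 - 1)) := by
    rw [Measure.volumeIoiPow]
    have hd : Measurable fun r : Set.Ioi (0:ℝ) => ENNReal.ofReal (r.1 ^ (3-1)) := by
      fun_prop
    rw [integrable_withDensity_iff hd (by
      filter_upwards with r using ENNReal.ofReal_lt_top)]
    have : Integrable (fun r : Set.Ioi (0:ℝ) => f r.1 * r.1 ^ 2)
        (Measure.comap Subtype.val volume) := by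
      rw [show (fun r : Set.Ioi (0:ℝ) => f r.1 * r.1 ^ 2) =
          ((fun r : ℝ => f r * r ^ 2) ∘ (Subtype.val : Set.Ioi (0:ℝ) → ℝ)) from rfl,
        ← (MeasurableEmbedding.subtype_coe measurableSet_Ioi).integrable_map_iff,
        map_comap_subtype_coe measurableSet_Ioi]
      exact hi.congr_fun (fun r hr => by ring) measurableSet_Ioi
    apply this.congr
    filter_upwards with r
    rw [ENNReal.toReal_ofReal (pow_nonneg (le_of_lt r.2) _)]
  have h1 : Integrable (fun _ : sphere (0:E3) 1 => (1:ℝ)) μ.toSphere := integrable_const _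
  have := h1.smul_prod h2
  apply this.congr
  filter_upwards with p
  simp

lemma int_g1 : Integrable (fun x : EuclideanSpace ℝ (Fin 3) => ((1 + ‖x‖ ^ 2) ^ 2)⁻¹) := by
  have h := integrable_rpow_neg_one_add_norm_sq
    (E := EuclideanSpace ℝ (Fin 3)) (μ := volume) (r := 4)
    (by rw [finrank_euclideanSpace_fin]; norm_num)
  apply h.congr
  filter_upwards with x
  have hb : (0:ℝ) < 1 + ‖x‖ ^ 2 := by positivity
  rw [show (-(4:ℝ)/2) = -(2:ℕ) by norm_num, Real.rpow_neg hb.le, Real.rpow_natCast]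

lemma int_g2 : Integrable (fun x : EuclideanSpace ℝ (Fin 3) => (‖x‖ ^ 2 * (1 + ‖x‖ ^ 2))⁻¹) := by
  have : Integrable (fun x : EuclideanSpace ℝ (Fin 3) => (‖x‖ ^ 2)⁻¹ * (1 + ‖x‖ ^ 2)⁻¹) := by
    apply integrable_radial (f := fun r : ℝ => (r ^ 2)⁻¹ * (1 + r ^ 2)⁻¹)
    have hint : IntegrableOn (fun r : ℝ => (1 + r ^ 2)⁻¹) (Set.Ioi 0) :=
      integrable_inv_one_add_sq.integrableOn
    apply hint.congr_fun ?_ measurableSet_Ioi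
    intro r hr
    have h2 : (r:ℝ) ^ 2 ≠ 0 := pow_ne_zero _ (ne_of_gt hr)
    field_simp
    exact (div_self (ne_of_gt hr)).symm
  apply this.congr
  filter_upwards with x
  rw [mul_inv]


set_option maxHeartbeats 1000000 in
lemma key_bound_s12 {κ η : ℝ} (hκ : 2 ≤ κ) (hη : 0 < η) (hηκ : η ≤ κ) {ℓ : ℕ} (hℓ : 4 ≤ ℓ)
    (β : EuclideanSpace ℝ (Fin 3)) (hβ : ‖β‖ = 1) (s : EuclideanSpace ℝ (Fin 3)) :
    1 / (‖((‖s‖ ^ 2 : ℝ) : ℂ) - ((κ : ℂ) + (η : ℝ) * Complex.I) * ((inner ℝ β s : ℝ) : ℂ)‖ *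
        (1 + η ^ 2 + ‖κ • β - s‖ ^ 2) ^ ((ℓ : ℝ) / 2))
    ≤ 8 / (η * κ) * (((1 + ‖κ • β - s‖ ^ 2) ^ 2)⁻¹ + (‖s‖ ^ 2 * (1 + ‖s‖ ^ 2))⁻¹) := by
  have hκ0 : (0:ℝ) < κ := lt_of_lt_of_le two_pos hκ
  rcases eq_or_ne s 0 with rfl | hs0
  · simp only [inner_zero_right, norm_zero]
    norm_num
    positivity
  have hsn : 0 < ‖s‖ := norm_pos_iff.2 hs0
  set u : ℝ := inner ℝ β s with hu
  set P : ℝ := ‖κ • β - s‖ with hPdef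
  set z : ℂ := ((‖s‖ ^ 2 : ℝ) : ℂ) - ((κ : ℂ) + (η : ℝ) * Complex.I) * ((u : ℝ) : ℂ) with hz
  set D := ‖z‖ with hD
  set W := (1 + η ^ 2 + P ^ 2) ^ ((ℓ : ℝ) / 2) with hW
  have hPnn : 0 ≤ P := norm_nonneg _
  have hzim : z.im = -(η * u) := by simp [hz, ← Complex.ofReal_pow]
  have hzre : z.re = ‖s‖ ^ 2 - κ * u := by simp [hz, ← Complex.ofReal_pow]
  have hDim : η * |u| ≤ D := by
    calc η * |u| = |z.im| := by rw [hzim, abs_neg, abs_mul, abs_of_pos hη]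
    _ ≤ D := Complex.abs_im_le_norm z
  have hDre : |‖s‖ ^ 2 - κ * u| ≤ D := hzre ▸ Complex.abs_re_le_norm z
  have hbase1 : (1:ℝ) ≤ 1 + η ^ 2 + P ^ 2 := by nlinarith [sq_nonneg η, sq_nonneg P]
  have hW2 : (1 + η ^ 2 + P ^ 2) ^ 2 ≤ W := by
    have hle : (2:ℝ) ≤ (ℓ : ℝ) / 2 := by
      have : (4:ℝ) ≤ (ℓ:ℝ) := by exact_mod_cast hℓ
      linarith
    have h := Real.rpow_le_rpow_of_exponent_le hbase1 hle
    rwa [show ((1:ℝ) + η ^ 2 + P ^ 2) ^ (2:ℝ) = (1 + η ^ 2 + P ^ 2) ^ (2:ℕ) by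
      rw [← Real.rpow_natCast]; norm_num] at h
  have hDnn : 0 ≤ D := norm_nonneg z
  have hWnn : 0 ≤ W := Real.rpow_nonneg (by positivity) _
  have hDden : η * ‖s‖ ^ 2 / (2 * κ) ≤ D := by
    rcases le_or_gt (κ * |u|) (‖s‖ ^ 2 / 2) with h | h
    · refine le_trans ?_ hDre
      have habs : ‖s‖ ^ 2 - κ * |u| ≤ |‖s‖ ^ 2 - κ * u| := by
        have h2 : κ * u ≤ κ * |u| := mul_le_mul_of_nonneg_left (le_abs_self u) hκ0.le
        calc ‖s‖ ^ 2 - κ * |u| ≤ ‖s‖ ^ 2 - κ * u := by linarith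
        _ ≤ |‖s‖ ^ 2 - κ * u| := le_abs_self _
      rw [div_le_iff₀ (by positivity)]
      nlinarith [abs_nonneg (‖s‖ ^ 2 - κ * u)]
    · refine le_trans ?_ hDim
      rw [div_le_iff₀ (by positivity)]
      nlinarith [hη.le, abs_nonneg u]
  clear_value u z D W P
  clear hz hD hW hu
  rcases le_or_gt ‖s‖ (κ / 2) with hc | hc
  · -- small ‖s‖
    have hPκ : κ / 2 ≤ P := by
      have h1 : ‖κ • β‖ - ‖s‖ ≤ ‖κ • β - s‖ := norm_sub_norm_le _ _
      rw [norm_smul, hβ, mul_one, Real.norm_eq_abs, abs_of_pos hκ0, ← hPdef] at h1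
      linarith
    have hPs : ‖s‖ ≤ P := le_trans hc hPκ
    have hmid : κ ^ 2 / 4 * (1 + ‖s‖ ^ 2) ≤ (1 + η ^ 2 + P ^ 2) ^ 2 := by
      have h1 : κ ^ 2 / 4 * (1 + ‖s‖ ^ 2) ≤ P ^ 2 * (1 + P ^ 2) := by
        apply mul_le_mul _ _ (by positivity) (by positivity)
        · nlinarith
        · nlinarith
      have h2 : (1 + η ^ 2 + P ^ 2) ^ 2
          = P ^ 2 * (1 + P ^ 2) + ((1 + η ^ 2) ^ 2 + P ^ 2 * (1 + 2 * η ^ 2)) := by ring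
      rw [h2]
      exact le_trans h1 (le_add_of_nonneg_right (by positivity))
    have hDW : (η * κ / 8) * (‖s‖ ^ 2 * (1 + ‖s‖ ^ 2)) ≤ D * W := by
      have := mul_le_mul hDden (le_trans hmid hW2) (by positivity)
        (le_trans (by positivity) hDden)
      calc (η * κ / 8) * (‖s‖ ^ 2 * (1 + ‖s‖ ^ 2))
          = (η * ‖s‖ ^ 2 / (2 * κ)) * (κ ^ 2 / 4 * (1 + ‖s‖ ^ 2)) := by
            field_simp; ring
        _ ≤ D * W := this
    calc 1 / (D * W) ≤ 1 / ((η * κ / 8) * (‖s‖ ^ 2 * (1 + ‖s‖ ^ 2))) :=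
          one_div_le_one_div_of_le (by positivity) hDW
      _ = 8 / (η * κ) * (‖s‖ ^ 2 * (1 + ‖s‖ ^ 2))⁻¹ := by
          field_simp
      _ ≤ 8 / (η * κ) * (((1 + P ^ 2) ^ 2)⁻¹ + (‖s‖ ^ 2 * (1 + ‖s‖ ^ 2))⁻¹) := by
          rw [mul_add]
          have h0 : (0:ℝ) ≤ 8 / (η * κ) * (((1 + P ^ 2) ^ 2)⁻¹) := by positivity
          linarith
  · -- large ‖s‖
    have hDlb : η * κ / 8 ≤ D := by
      refine le_trans ?_ hDden
      rw [div_le_div_iff₀ (by norm_num) (by positivity)]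
      have hs2 : κ ^ 2 / 4 ≤ ‖s‖ ^ 2 := by nlinarith
      nlinarith [mul_le_mul_of_nonneg_left hs2 hη.le]
    have hWlb : (1 + P ^ 2) ^ 2 ≤ W := by
      refine le_trans ?_ hW2
      have : (1:ℝ) + P ^ 2 ≤ 1 + η ^ 2 + P ^ 2 := by nlinarith [sq_nonneg η]
      exact pow_le_pow_left₀ (by positivity) this 2
    calc 1 / (D * W) ≤ 1 / ((η * κ / 8) * ((1 + P ^ 2) ^ 2)) :=
          one_div_le_one_div_of_le (by positivity)
            (mul_le_mul hDlb hWlb (by positivity) (le_trans (by positivity) hDlb))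
      _ = 8 / (η * κ) * (((1 + P ^ 2) ^ 2)⁻¹) := by field_simp
      _ ≤ 8 / (η * κ) * (((1 + P ^ 2) ^ 2)⁻¹ + (‖s‖ ^ 2 * (1 + ‖s‖ ^ 2))⁻¹) := by
          rw [mul_add]
          have h0 : (0:ℝ) ≤ 8 / (η * κ) * ((‖s‖ ^ 2 * (1 + ‖s‖ ^ 2))⁻¹) := by positivity
          linarith


theorem stmt_12 (a : ℝ) (ha : 0 < a) (ℓ : ℕ) (hℓ : 4 ≤ ℓ)
    (β : EuclideanSpace ℝ (Fin 3)) (hβ : ‖β‖ = 1) :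
    Filter.Tendsto
      (fun κ : ℝ => κ *
        ∫ s : EuclideanSpace ℝ (Fin 3),
          1 / (‖((‖s‖ ^ 2 : ℝ) : ℂ) -
                  ((κ : ℂ) + (a⁻¹ * Real.log κ : ℝ) * Complex.I) * ((inner ℝ β s : ℝ) : ℂ)‖ *
               (1 + (a⁻¹ * Real.log κ) ^ 2 + ‖κ • β - s‖ ^ 2) ^ ((ℓ : ℝ) / 2)))
      Filter.atTop (nhds 0) := by
  set C₁ : ℝ := ∫ x : EuclideanSpace ℝ (Fin 3), ((1 + ‖x‖ ^ 2) ^ 2)⁻¹ with hC₁def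
  set C₂ : ℝ := ∫ x : EuclideanSpace ℝ (Fin 3), (‖x‖ ^ 2 * (1 + ‖x‖ ^ 2))⁻¹ with hC₂def
  have fnonneg : ∀ (κ : ℝ) (s : EuclideanSpace ℝ (Fin 3)), (0:ℝ) ≤
      1 / (‖((‖s‖ ^ 2 : ℝ) : ℂ) -
          ((κ : ℂ) + (a⁻¹ * Real.log κ : ℝ) * Complex.I) * ((inner ℝ β s : ℝ) : ℂ)‖ *
          (1 + (a⁻¹ * Real.log κ) ^ 2 + ‖κ • β - s‖ ^ 2) ^ ((ℓ : ℝ) / 2)) := by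
    intro κ s
    apply div_nonneg zero_le_one
    exact mul_nonneg (norm_nonneg _) (Real.rpow_nonneg (by positivity) _)
  apply tendsto_of_tendsto_of_tendsto_of_le_of_le' (g := fun _ : ℝ => (0:ℝ))
    (h := fun κ : ℝ => 8 * a * (C₁ + C₂) / Real.log κ)
  · exact tendsto_const_nhds
  · exact tendsto_const_nhds.div_atTop Real.tendsto_log_atTop
  · filter_upwards [eventually_ge_atTop (0:ℝ)] with κ hκ
    exact mul_nonneg hκ (integral_nonneg (fnonneg κ))
  · have hev1 : ∀ᶠ κ : ℝ in atTop, a⁻¹ * Real.log κ ≤ κ := by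
      have h := (Real.isLittleO_log_id_atTop.const_mul_left a⁻¹).def one_pos
      filter_upwards [h, eventually_ge_atTop (0:ℝ)] with κ h1 h2
      calc a⁻¹ * Real.log κ ≤ |a⁻¹ * Real.log κ| := le_abs_self _
        _ ≤ |κ| := by rw [abs_mul, abs_inv]; simpa [Real.norm_eq_abs] using h1
        _ = κ := _root_.abs_of_nonneg h2
    filter_upwards [hev1, eventually_ge_atTop (2:ℝ)] with κ hηκ hκ2
    set η := a⁻¹ * Real.log κ with hηdef
    have hη : 0 < η := mul_pos (inv_pos.2 ha) (Real.log_pos (by linarith))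
    have hκ0 : (0:ℝ) < κ := by linarith
    have hg1 : Integrable (fun s : EuclideanSpace ℝ (Fin 3) =>
        ((1 + ‖κ • β - s‖ ^ 2) ^ 2)⁻¹) := by
      have h := int_g1.comp_sub_left (κ • β)
      exact h
    have hgint : Integrable (fun s : EuclideanSpace ℝ (Fin 3) =>
        8 / (η * κ) * (((1 + ‖κ • β - s‖ ^ 2) ^ 2)⁻¹ + (‖s‖ ^ 2 * (1 + ‖s‖ ^ 2))⁻¹)) :=
      (hg1.add int_g2).const_mul _
    have hmono : (∫ s : EuclideanSpace ℝ (Fin 3),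
        1 / (‖((‖s‖ ^ 2 : ℝ) : ℂ) -
            ((κ : ℂ) + (η : ℝ) * Complex.I) * ((inner ℝ β s : ℝ) : ℂ)‖ *
            (1 + η ^ 2 + ‖κ • β - s‖ ^ 2) ^ ((ℓ : ℝ) / 2)))
        ≤ ∫ s : EuclideanSpace ℝ (Fin 3),
        8 / (η * κ) * (((1 + ‖κ • β - s‖ ^ 2) ^ 2)⁻¹ + (‖s‖ ^ 2 * (1 + ‖s‖ ^ 2))⁻¹) := by
      apply integral_mono_of_nonneg
      · exact Filter.Eventually.of_forall (fnonneg κ)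
      · exact hgint
      · exact Filter.Eventually.of_forall (fun s => key_bound_s12 hκ2 hη hηκ hℓ β hβ s)
    have hgval : (∫ s : EuclideanSpace ℝ (Fin 3),
        8 / (η * κ) * (((1 + ‖κ • β - s‖ ^ 2) ^ 2)⁻¹ + (‖s‖ ^ 2 * (1 + ‖s‖ ^ 2))⁻¹))
        = 8 / (η * κ) * (C₁ + C₂) := by
      rw [integral_const_mul, integral_add hg1 int_g2]
      congr 2
      exact integral_sub_left_eq_self
        (fun x : EuclideanSpace ℝ (Fin 3) => ((1 + ‖x‖ ^ 2) ^ 2)⁻¹) volume (κ • β)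
    have hC1nn : 0 ≤ C₁ := integral_nonneg (fun x => by positivity)
    have hC2nn : 0 ≤ C₂ := integral_nonneg (fun x => by positivity)
    calc κ * ∫ s : EuclideanSpace ℝ (Fin 3),
          1 / (‖((‖s‖ ^ 2 : ℝ) : ℂ) -
            ((κ : ℂ) + (η : ℝ) * Complex.I) * ((inner ℝ β s : ℝ) : ℂ)‖ *
            (1 + η ^ 2 + ‖κ • β - s‖ ^ 2) ^ ((ℓ : ℝ) / 2))
        ≤ κ * (8 / (η * κ) * (C₁ + C₂)) :=
          mul_le_mul_of_nonneg_left (le_of_le_of_eq hmono hgval) hκ0.le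
      _ = 8 * a * (C₁ + C₂) / Real.log κ := by
          rw [hηdef]
          have hlog : Real.log κ ≠ 0 := ne_of_gt (Real.log_pos (by linarith))
          field_simp
end
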